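/- Let n ≥ 2, let (X,d) be a complete metric space with |X| ≥ n, and let T : X → X be a mapping contracting total pairwise distance on n points. If T has no periodic points of prime period k for any k ∈ {2,...,n−1}, then T has a fixed point. -/

import Mathlib

noncomputable def totalS {X : Type*} [MetricSpace X] {n : ℕ} (x : Fin n → X) : ℝ :=
  ∑ i : Fin n, ∑ j ∈ Finset.Ioi i, dist (x i) (x j)

lemma totalS_nonneg' {X : Type*} [MetricSpace X] {n : ℕ} (x : Fin n → X) : 0 ≤ totalS x :=
  Finset.sum_nonneg fun _ _ => Finset.sum_nonneg fun _ _ => dist_nonneg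

lemma dist_le_totalS' {X : Type*} [MetricSpace X] {n : ℕ} (x : Fin n → X) {i j : Fin n}
    (h : i < j) : dist (x i) (x j) ≤ totalS x := by
  have h1 : dist (x i) (x j) ≤ ∑ j' ∈ Finset.Ioi i, dist (x i) (x j') :=
    Finset.single_le_sum (f := fun j' => dist (x i) (x j')) (fun k _ => dist_nonneg)
      (Finset.mem_Ioi.mpr h)
  refine h1.trans ?_
  exact Finset.single_le_sum (f := fun i => ∑ j' ∈ Finset.Ioi i, dist (x i) (x j'))
    (fun k _ => Finset.sum_nonneg fun _ _ => dist_nonneg) (Finset.mem_univ i)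

theorem stmt_5 {X : Type*} [MetricSpace X] [CompleteSpace X] (n : ℕ) (hn : 2 ≤ n)
    (hcard : ∃ f : Fin n → X, Function.Injective f)
    (T : X → X)
    (hT : ∃ α : ℝ, 0 ≤ α ∧ α < 1 ∧
      ∀ x : Fin n → X, Function.Injective x → totalS (T ∘ x) ≤ α * totalS x)
    (hper : ∀ (x : X) (k : ℕ), 2 ≤ k → k ≤ n - 1 →
      ¬(T^[k] x = x ∧ ∀ j : ℕ, 1 ≤ j → j < k → T^[j] x ≠ x)) :
    ∃ x : X, T x = x := by
  classical
  obtain ⟨α, hα0, hα1, hc⟩ := hT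
  obtain ⟨f, hf⟩ := hcard
  by_cases hfix : ∃ x : X, T x = x
  · exact hfix
  exfalso
  push_neg at hfix
  have h0n : (0 : ℕ) < n := by omega
  have h1n : (1 : ℕ) < n := by omega
  have h01 : (⟨0, h0n⟩ : Fin n) < ⟨1, h1n⟩ := Fin.mk_lt_mk.mpr (by omega)
  -- Step A: per-point window injectivity
  have hwinlt : ∀ (y : X), ∀ i j : Fin n, i < j → T^[(i:ℕ)] y ≠ T^[(j:ℕ)] y := by
    intro y i j hij heq
    set z := T^[(i:ℕ)] y with hz
    set p := (j : ℕ) - (i : ℕ) with hp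
    have hp1 : 1 ≤ p := by
      have := Fin.lt_iff_val_lt_val.mp hij; omega
    have hpz : T^[p] z = z := by
      rw [hz, ← Function.iterate_add_apply, show p + (i:ℕ) = (j:ℕ) by omega, ← heq]
    have hex : ∃ m, 1 ≤ m ∧ T^[m] z = z := ⟨p, hp1, hpz⟩
    set m := Nat.find hex with hm
    obtain ⟨hm1, hmz⟩ := Nat.find_spec hex
    have hmp : m ≤ p := Nat.find_le ⟨hp1, hpz⟩
    have hmn : m ≤ n - 1 := by
      have : p ≤ n - 1 := by have := j.isLt; omega
      omega
    rcases eq_or_lt_of_le hm1 with h1 | h2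
    · exact hfix z (by simpa [← h1] using hmz)
    · refine hper z m h2 hmn ⟨hmz, ?_⟩
      intro j' hj1 hjm heq'
      exact Nat.find_min hex hjm ⟨hj1, heq'⟩
  have hwin : ∀ y : X, Function.Injective (fun i : Fin n => T^[(i:ℕ)] y) := by
    intro y i j heq
    by_contra hne
    rcases lt_or_gt_of_ne hne with h | h
    · exact hwinlt y i j h heq
    · exact hwinlt y j i h heq.symm
  -- Step B: iterated contraction
  have hiter : ∀ (y : X) (k : ℕ),
      totalS (fun i : Fin n => T^[(i:ℕ)] (T^[k] y)) ≤ α ^ k * totalS (fun i : Fin n => T^[(i:ℕ)] y) := by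
    intro y k
    induction k generalizing y with
    | zero => simp
    | succ k ih =>
      have h1 : T^[k+1] y = T^[k] (T y) := Function.iterate_succ_apply T k y
      rw [h1]
      calc totalS (fun i : Fin n => T^[(i:ℕ)] (T^[k] (T y)))
          ≤ α ^ k * totalS (fun i : Fin n => T^[(i:ℕ)] (T y)) := ih (T y)
        _ ≤ α ^ k * (α * totalS (fun i : Fin n => T^[(i:ℕ)] y)) := by
            refine mul_le_mul_of_nonneg_left ?_ (pow_nonneg hα0 k)
            have h2 : (fun i : Fin n => T^[(i:ℕ)] (T y)) = T ∘ (fun i : Fin n => T^[(i:ℕ)] y) := by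
              funext i
              rw [Function.comp_apply, ← Function.iterate_succ_apply, Function.iterate_succ_apply']
            rw [h2]
            exact hc _ (hwin y)
        _ = α ^ (k+1) * totalS (fun i : Fin n => T^[(i:ℕ)] y) := by ring
  -- Step C: the orbit
  set x₀ : X := f ⟨0, h0n⟩ with hx₀
  set a : ℕ → X := fun k => T^[k] x₀ with ha
  set S₀ : ℝ := totalS (fun i : Fin n => T^[(i:ℕ)] x₀) with hS₀
  have hdista : ∀ k, dist (a k) (a (k+1)) ≤ S₀ * α ^ k := by
    intro k
    have h1 := hiter x₀ k
    have h2 : dist ((fun i : Fin n => T^[(i:ℕ)] (T^[k] x₀)) ⟨0, h0n⟩)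
        ((fun i : Fin n => T^[(i:ℕ)] (T^[k] x₀)) ⟨1, h1n⟩)
        ≤ totalS (fun i : Fin n => T^[(i:ℕ)] (T^[k] x₀)) :=
      dist_le_totalS' (fun i : Fin n => T^[(i:ℕ)] (T^[k] x₀)) h01
    simp only [Function.iterate_zero_apply, Function.iterate_one] at h2
    have h3 : a (k+1) = T (T^[k] x₀) := Function.iterate_succ_apply' T k x₀
    show dist (T^[k] x₀) (a (k+1)) ≤ S₀ * α ^ k
    rw [h3]
    calc dist (T^[k] x₀) (T (T^[k] x₀)) ≤ totalS (fun i : Fin n => T^[(i:ℕ)] (T^[k] x₀)) := h2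
      _ ≤ α ^ k * S₀ := h1
      _ = S₀ * α ^ k := by ring
  have hcauchy : CauchySeq a := cauchySeq_of_le_geometric α S₀ hα1 hdista
  obtain ⟨xs, hxs⟩ := cauchySeq_tendsto_of_complete hcauchy
  -- Step D: global injectivity of the orbit
  have hainj : ∀ m m' : ℕ, m < m' → a m ≠ a m' := by
    intro m m' hmm heq
    set z := a m with hzdef
    set p := m' - m with hpdef
    have hp1 : 1 ≤ p := by omega
    have hpz : T^[p] z = z := by
      show T^[p] (T^[m] x₀) = T^[m] x₀
      rw [← Function.iterate_add_apply, show p + m = m' by omega]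
      exact heq.symm
    have h1 := hiter z p
    rw [hpz] at h1
    set Sz : ℝ := totalS (fun i : Fin n => T^[(i:ℕ)] z) with hSz
    have hαp : α ^ p < 1 := pow_lt_one₀ hα0 hα1 (by omega)
    have hSzpos : 0 < Sz := by
      have h2 : dist ((fun i : Fin n => T^[(i:ℕ)] z) ⟨0, h0n⟩)
          ((fun i : Fin n => T^[(i:ℕ)] z) ⟨1, h1n⟩) ≤ Sz :=
        dist_le_totalS' (fun i : Fin n => T^[(i:ℕ)] z) h01
      simp only [Function.iterate_zero_apply, Function.iterate_one] at h2
      have hzz : z ≠ T z := fun h => hfix z h.symm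
      have := dist_pos.mpr hzz
      linarith
    nlinarith
  -- Step E: eventually the orbit avoids xs
  have hM : ∃ M : ℕ, ∀ k, M ≤ k → ∀ j : ℕ, a (k + j) ≠ xs := by
    by_cases hex : ∃ m, a m = xs
    · obtain ⟨m, hm⟩ := hex
      refine ⟨m + 1, fun k hk j heq => ?_⟩
      exact hainj m (k + j) (by omega) (by rw [hm, heq])
    · push_neg at hex
      exact ⟨0, fun k _ j => hex (k + j)⟩
  obtain ⟨M, hMs⟩ := hM
  -- Step F: auxiliary tuple
  set u : ℕ → Fin n → X := fun k i => if (i : ℕ) = 0 then xs else a (k + (i:ℕ) - 1) with hu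
  have huval : ∀ k (i : Fin n), (i:ℕ) ≠ 0 → u k i = a (k + (i:ℕ) - 1) := by
    intro k i hi
    show (if (i : ℕ) = 0 then xs else a (k + (i:ℕ) - 1)) = _
    rw [if_neg hi]
  have huval0 : ∀ k (i : Fin n), (i:ℕ) = 0 → u k i = xs := by
    intro k i hi
    show (if (i : ℕ) = 0 then xs else a (k + (i:ℕ) - 1)) = _
    rw [if_pos hi]
  have huinj : ∀ k, M ≤ k → Function.Injective (u k) := by
    intro k hk i j heq
    by_cases hi : (i:ℕ) = 0 <;> by_cases hj : (j:ℕ) = 0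
    · exact Fin.ext (by omega)
    · rw [huval0 k i hi, huval k j hj] at heq
      exact absurd heq.symm (by
        have := hMs k hk ((j:ℕ) - 1)
        rwa [show k + ((j:ℕ) - 1) = k + (j:ℕ) - 1 by omega] at this)
    · rw [huval k i hi, huval0 k j hj] at heq
      exact absurd heq (by
        have := hMs k hk ((i:ℕ) - 1)
        rwa [show k + ((i:ℕ) - 1) = k + (i:ℕ) - 1 by omega] at this)
    · rw [huval k i hi, huval k j hj] at heq
      have hij : k + (i:ℕ) - 1 = k + (j:ℕ) - 1 := by
        by_contra hne
        rcases Nat.lt_or_ge (k + (i:ℕ) - 1) (k + (j:ℕ) - 1) with h | h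
        · exact hainj _ _ h heq
        · exact hainj _ _ (by omega) heq.symm
      exact Fin.ext (by omega)
  -- Step G: key distance bound
  have hkey : ∀ k, M ≤ k → dist (T xs) (a (k+1)) ≤ α * totalS (u k) := by
    intro k hk
    have h1 : dist ((T ∘ u k) ⟨0, h0n⟩) ((T ∘ u k) ⟨1, h1n⟩) ≤ totalS (T ∘ u k) :=
      dist_le_totalS' _ h01
    have h2 : (T ∘ u k) ⟨0, h0n⟩ = T xs := by
      rw [Function.comp_apply, huval0 k _ rfl]
    have h3 : (T ∘ u k) ⟨1, h1n⟩ = a (k+1) := by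
      rw [Function.comp_apply, huval k ⟨1, h1n⟩ (by simp)]
      show T (a (k + 1 - 1)) = a (k + 1)
      rw [show k + 1 - 1 = k from rfl]
      exact (Function.iterate_succ_apply' T k x₀).symm
    rw [h2, h3] at h1
    exact h1.trans (hc _ (huinj k hk))
  -- Step H: totalS (u k) → 0
  have hui : ∀ i : Fin n, Filter.Tendsto (fun k => u k i) Filter.atTop (nhds xs) := by
    intro i
    by_cases hi : (i:ℕ) = 0
    · have : (fun k => u k i) = fun _ => xs := funext fun k => huval0 k i hi
      rw [this]
      exact tendsto_const_nhds
    · have h1 : Filter.Tendsto (fun k : ℕ => a (k + ((i:ℕ) - 1))) Filter.atTop (nhds xs) :=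
        hxs.comp (Filter.tendsto_add_atTop_nat _)
      refine h1.congr fun k => ?_
      rw [huval k i hi]
      congr 1
      omega
  have hu0 : Filter.Tendsto (fun k => totalS (u k)) Filter.atTop (nhds 0) := by
    have h1 : Filter.Tendsto (fun k => ∑ i : Fin n, ∑ j ∈ Finset.Ioi i, dist (u k i) (u k j))
        Filter.atTop (nhds (∑ i : Fin n, ∑ j ∈ Finset.Ioi i, (0:ℝ))) := by
      refine tendsto_finset_sum _ fun i _ => ?_
      refine tendsto_finset_sum _ fun j _ => ?_
      have := (hui i).dist (hui j)
      rwa [dist_self] at this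
    simpa [totalS] using h1
  -- Step I: conclude
  have ha1 : Filter.Tendsto (fun k : ℕ => a (k+1)) Filter.atTop (nhds xs) :=
    hxs.comp (Filter.tendsto_add_atTop_nat 1)
  have hda : Filter.Tendsto (fun k : ℕ => dist (a (k+1)) xs) Filter.atTop (nhds 0) := by
    have h1 : Filter.Tendsto (fun _ : ℕ => xs) Filter.atTop (nhds xs) := tendsto_const_nhds
    have := ha1.dist h1
    rwa [dist_self] at this
  have hlim : Filter.Tendsto (fun k : ℕ => α * totalS (u k) + dist (a (k+1)) xs)
      Filter.atTop (nhds 0) := by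
    have := (hu0.const_mul α).add hda
    simpa using this
  have hev : ∀ᶠ k in Filter.atTop, dist (T xs) xs ≤ α * totalS (u k) + dist (a (k+1)) xs := by
    refine Filter.eventually_atTop.mpr ⟨M, fun k hk => ?_⟩
    calc dist (T xs) xs ≤ dist (T xs) (a (k+1)) + dist (a (k+1)) xs := dist_triangle _ _ _
      _ ≤ α * totalS (u k) + dist (a (k+1)) xs := by
          have := hkey k hk; linarith
  have hle0 : dist (T xs) xs ≤ 0 := ge_of_tendsto hlim hev
  exact hfix xs (dist_eq_zero.mp (le_antisymm hle0 dist_nonneg))
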